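/- In the Jordan plane over a field of characteristic p > 2, the automorphism g (defined by g(x) = x, g(y) = y + x, extended as an algebra automorphism) satisfies g(y^n) = y^n + n x y^{n−1} + (1/4)(n² − n) x² y^{n−2} for all n ≥ 1. -/
import Mathlib


/-- In the Jordan plane over a field of characteristic `p > 2` (universally: in any
algebra with elements `x, y` satisfying `yx = xy - (1/2)x²`), the algebra endomorphism
`g` with `g(x) = x`, `g(y) = y + x` satisfies
`g(y^n) = y^n + n x y^{n-1} + (1/4)(n² - n) x² y^{n-2}` for all `n ≥ 1`. -/
theorem stmt4 (p : ℕ) [Fact p.Prime] (hp2 : 2 < p)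
    (K : Type*) [Field K] [CharP K p]
    (A : Type*) [Ring A] [Algebra K A] (x y : A)
    (hrel : y * x = x * y - (1/2 : K) • x ^ 2)
    (g : A →ₐ[K] A) (hgx : g x = x) (hgy : g y = y + x)
    (n : ℕ) (hn : 1 ≤ n) :
    g (y ^ n) = y ^ n + (n : K) • (x * y ^ (n - 1)) +
      (((n ^ 2 - n : ℕ) : K) / 4) • (x ^ 2 * y ^ (n - 2)) := by
  have hprime : p.Prime := Fact.out
  have h2K : (2 : K) ≠ 0 := by
    intro h
    have h' : ((2 : ℕ) : K) = 0 := by exact_mod_cast h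
    rw [CharP.cast_eq_zero_iff K p 2] at h'
    have := Nat.le_of_dvd (by norm_num) h'
    omega
  have h4K : (4 : K) ≠ 0 := by
    intro h
    apply h2K
    have h22 : (2 : K) * 2 = 0 := by rw [← h]; norm_num
    rcases mul_eq_zero.mp h22 with h' | h' <;> exact h'
  have hyx2 : y * x ^ 2 = x ^ 2 * y - x ^ 3 := by
    rw [pow_two, ← mul_assoc, hrel, sub_mul, smul_mul_assoc, mul_assoc, hrel,
      mul_sub, mul_smul_comm, ← mul_assoc, ← pow_two, ← pow_succ', ← pow_succ]
    match_scalars <;> (field_simp; try ring)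
  have L1 : ∀ k : ℕ, y * (x * y ^ k) = x * y ^ (k + 1) - (1/2 : K) • (x ^ 2 * y ^ k) := by
    intro k
    rw [← mul_assoc, hrel, sub_mul, smul_mul_assoc, mul_assoc, ← pow_succ']
  have L2 : ∀ k : ℕ, y * (x ^ 2 * y ^ k) = x ^ 2 * y ^ (k + 1) - x ^ 3 * y ^ k := by
    intro k
    rw [← mul_assoc, hyx2, sub_mul, mul_assoc, ← pow_succ']
  have key : ∀ m : ℕ, g (y ^ (m + 2)) = y ^ (m + 2) +
      ((m + 2 : ℕ) : K) • (x * y ^ (m + 1)) +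
      ((((m + 2) * (m + 1) : ℕ) : K) / 4) • (x ^ 2 * y ^ m) := by
    intro m
    induction m with
    | zero =>
      have hg2 : g (y ^ (0 + 2)) = (y + x) * (y + x) := by
        rw [show (0 + 2 : ℕ) = 2 from rfl, pow_two, map_mul, hgy]
      rw [hg2, add_mul, mul_add, mul_add, hrel]
      simp only [zero_add, pow_one, pow_zero, mul_one]
      rw [← pow_two y, ← pow_two x]
      push_cast
      match_scalars <;> (field_simp; try ring)
    | succ m ih =>
      have e : y ^ (m + 1 + 2) = y * y ^ (m + 2) := by rw [← pow_succ']
      have f1 : x * (x * y ^ (m + 1)) = x ^ 2 * y ^ (m + 1) := by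
        rw [← mul_assoc, ← pow_two]
      have f2 : x * (x ^ 2 * y ^ m) = x ^ 3 * y ^ m := by
        rw [← mul_assoc, ← pow_succ']
      rw [e, map_mul, hgy, ih]
      simp only [add_mul, mul_add, mul_smul_comm]
      rw [L1 (m + 1), L2 m, f1, f2, ← pow_succ' y (m + 2)]
      simp only [show m + 1 + 1 = m + 2 from rfl, show m + 2 + 1 = m + 3 from rfl,
        show m + 1 + 2 = m + 3 from rfl]
      push_cast
      match_scalars <;> (field_simp; try ring)
  match n, hn with
  | 1, _ =>
    simp only [pow_one, Nat.sub_self, pow_zero, mul_one, Nat.cast_one, one_smul]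
    rw [hgy]
    norm_num
  | (m + 2), _ =>
    have hc : (m + 2) ^ 2 - (m + 2) = (m + 2) * (m + 1) := by
      have h : (m + 2) ^ 2 = (m + 2) * (m + 1) + (m + 2) := by ring
      omega
    simpa [hc] using key m
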